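/- Let T be a finite index set with positive real weights w and let n ≤ |T|. If n elements are selected sequentially without replacement, where the i-th element is chosen from T minus the previously selected elements with probability P̂(t_i | [t_0,...,t_{i-1}]; T, n), then for every n-element subset T̂ of T, the probability that the set of selected elements equals T̂ is P̃(T̂; T, n) = (∏_{i ∈ T̂} w_i) / e_n(T; w). Equivalently, the sum over all n! orderings (t_0,...,t_{n-1}) of T̂ of ∏_{i=0}^{n-1} P̂(t_i | [t_0,...,t_{i-1}]; T, n) equals (∏_{i ∈ T̂} w_i) / e_n(T; w). -/

import Mathlib

/-- Weighted elementary symmetric sum: `e_m(S; w) = Σ_{T̂ ⊆ S, |T̂| = m} ∏_{j ∈ T̂} w_j`. -/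
noncomputable def esymm {ι : Type*} (S : Finset ι) (w : ι → ℝ) (m : ℕ) : ℝ :=
  ∑ T ∈ S.powersetCard m, ∏ j ∈ T, w j

/-- The sequential selection probability
`P̂(t | V; T, n) = w_t · e_{n-i-1}(T \ (V ∪ {t}); w) / ((n - i) · e_{n-i}(T \ V; w))`
where `i` is the number of already-selected elements recorded in the list `V`. -/
noncomputable def Phat {ι : Type*} [DecidableEq ι] (T : Finset ι) (w : ι → ℝ) (n : ℕ)
    (V : List ι) (t : ι) : ℝ :=
  w t * esymm (T \ insert t V.toFinset) w (n - V.length - 1) /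
    (((n - V.length : ℕ) : ℝ) * esymm (T \ V.toFinset) w (n - V.length))

lemma esymm_zero {ι : Type*} (S : Finset ι) (w : ι → ℝ) : esymm S w 0 = 1 := by
  simp [esymm]

lemma esymm_pos {ι : Type*} (S : Finset ι) (w : ι → ℝ) (hw : ∀ j ∈ S, 0 < w j)
    {m : ℕ} (hm : m ≤ S.card) : 0 < esymm S w m := by
  unfold esymm
  apply Finset.sum_pos
  · intro t ht
    rw [Finset.mem_powersetCard] at ht
    exact Finset.prod_pos fun j hj => hw j (ht.1 hj)
  · obtain ⟨t, ht, hc⟩ := Finset.exists_subset_card_eq hm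
    exact ⟨t, Finset.mem_powersetCard.2 ⟨ht, hc⟩⟩

lemma prod_Phat_eq {ι : Type*} [DecidableEq ι] (T : Finset ι) (w : ι → ℝ)
    (hw : ∀ j ∈ T, 0 < w j) (n : ℕ) (hn : n ≤ T.card) :
    ∀ (L V : List ι), (V ++ L).Nodup → (V ++ L).toFinset ⊆ T →
      V.length + L.length = n →
      (∏ i : Fin L.length, Phat T w n (V ++ L.take i) (L.get i))
        = (L.map w).prod /
            ((L.length).factorial * esymm (T \ V.toFinset) w L.length) := by
  intro L
  induction L with
  | nil => intro V _ _ _; simp [esymm_zero]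
  | cons t L' ih =>
    intro V hnd hsub hlen
    have hnd' : ((V ++ [t]) ++ L').Nodup := by rwa [List.append_cons] at hnd
    have hsub' : ((V ++ [t]) ++ L').toFinset ⊆ T := by rwa [List.append_cons] at hsub
    have hlen' : (V ++ [t]).length + L'.length = n := by
      simp only [List.length_append, List.length_cons, List.length_nil] at hlen ⊢
      omega
    have hih := ih (V ++ [t]) hnd' hsub' hlen'
    have hnv : n - V.length = L'.length + 1 := by
      simp only [List.length_cons] at hlen; omega
    -- rewrite the product
    have hprod : (∏ i : Fin (t :: L').length, Phat T w n (V ++ (t :: L').take i)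
          ((t :: L').get i))
        = Phat T w n V t *
          ∏ i : Fin L'.length, Phat T w n ((V ++ [t]) ++ L'.take i) (L'.get i) := by
      simp only [List.length_cons]
      rw [Fin.prod_univ_succ]
      congr 1
      · simp
      · apply Finset.prod_congr rfl
        intro i _
        have h2 : V ++ (t :: L').take (↑i.succ : ℕ) = (V ++ [t]) ++ L'.take ↑i := by
          rw [Fin.val_succ, List.take_succ_cons, List.append_cons]
        rw [h2]
        rfl
    rw [hprod, hih]
    -- identify the inserted finset
    have hins : insert t V.toFinset = ((V ++ [t]).toFinset) := by
      ext x; simp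
    -- nodup / subset facts
    have hVnd : V.Nodup := (List.nodup_append.mp hnd).1
    have hVtnd : (V ++ [t]).Nodup :=
      List.Nodup.sublist (List.sublist_append_left (V ++ [t]) L') hnd'
    have hVsub : V.toFinset ⊆ T := fun x hx => hsub (by simp at hx ⊢; tauto)
    have hVtsub : (V ++ [t]).toFinset ⊆ T := fun x hx => hsub' (by simp at hx ⊢; tauto)
    -- cardinalities
    have hlenc : V.length + L'.length + 1 = n := by
      simp only [List.length_cons] at hlen; omega
    have hcard1 : (T \ (V ++ [t]).toFinset).card = T.card - (V.length + 1) := by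
      rw [Finset.card_sdiff_of_subset hVtsub, List.toFinset_card_of_nodup hVtnd]
      simp
    have hcard2 : (T \ V.toFinset).card = T.card - V.length := by
      rw [Finset.card_sdiff_of_subset hVsub, List.toFinset_card_of_nodup hVnd]
    have hA : 0 < esymm (T \ (V ++ [t]).toFinset) w L'.length :=
      esymm_pos _ w (fun j hj => hw j (Finset.mem_sdiff.mp hj).1) (by omega)
    have hB : 0 < esymm (T \ V.toFinset) w (L'.length + 1) :=
      esymm_pos _ w (fun j hj => hw j (Finset.mem_sdiff.mp hj).1) (by omega)
    -- finish by algebra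
    rw [Phat, hnv, hins]
    simp only [Nat.add_sub_cancel, List.length_cons, List.map_cons, List.prod_cons,
      Nat.factorial_succ]
    set A := esymm (T \ (V ++ [t]).toFinset) w L'.length with hAdef
    set B := esymm (T \ V.toFinset) w (L'.length + 1) with hBdef
    have hA0 : A ≠ 0 := ne_of_gt hA
    have hB0 : B ≠ 0 := ne_of_gt hB
    have hfac : ((L'.length).factorial : ℝ) ≠ 0 := by positivity
    have hk1 : ((L'.length : ℝ) + 1) ≠ 0 := by positivity
    push_cast
    field_simp

/-- Sequential selection without replacement according to `P̂` draws each `n`-element subset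
`T̂ ⊆ T` with probability `P̃(T̂; T, n) = (∏_{i ∈ T̂} w_i) / e_n(T; w)`: the sum over all `n!`
orderings `(t_0,...,t_{n-1})` of `T̂` of `∏_{i=0}^{n-1} P̂(t_i | [t_0,...,t_{i-1}]; T, n)`
equals `(∏_{i ∈ T̂} w_i) / e_n(T; w)`. -/
theorem sum_orderings_prod_Phat {ι : Type*} [DecidableEq ι] (T : Finset ι) (w : ι → ℝ)
    (hw : ∀ j ∈ T, 0 < w j) (n : ℕ) (hn : n ≤ T.card)
    (That : Finset ι) (hsub : That ⊆ T) (hcard : That.card = n) :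
    ((That.toList.permutations).map
        (fun L => ∏ i : Fin L.length, Phat T w n (L.take i) (L.get i))).sum
      = (∏ i ∈ That, w i) / esymm T w n := by
  have hE : 0 < esymm T w n := esymm_pos T w hw hn
  have hkey : ∀ L ∈ That.toList.permutations,
      (∏ i : Fin L.length, Phat T w n (L.take i) (L.get i))
        = (∏ i ∈ That, w i) / (n.factorial * esymm T w n) := by
    intro L hL
    have hperm : List.Perm L That.toList := List.mem_permutations.mp hL
    have hnd : L.Nodup := hperm.nodup_iff.mpr That.nodup_toList
    have htf : L.toFinset = That := by
      rw [List.toFinset_eq_of_perm _ _ hperm, Finset.toList_toFinset]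
    have hlen : L.length = n := by
      rw [hperm.length_eq, Finset.length_toList, hcard]
    have h := prod_Phat_eq T w hw n hn L [] (by simpa using hnd)
      (by simpa [htf] using hsub) (by simpa using hlen)
    simp only [List.nil_append, List.toFinset_nil, Finset.sdiff_empty] at h
    rw [h, hlen, ← htf, List.prod_toFinset w hnd]
  have hmap := List.map_congr_left (l := That.toList.permutations)
    (g := fun _ => (∏ i ∈ That, w i) / (n.factorial * esymm T w n)) hkey
  rw [hmap, List.map_const', List.sum_replicate,
    List.length_permutations, Finset.length_toList, hcard, nsmul_eq_mul]
  have hfac : (n.factorial : ℝ) ≠ 0 := by positivity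
  have hE0 : esymm T w n ≠ 0 := ne_of_gt hE
  field_simp
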